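/- Let a < b be real numbers and f : ℝ → ℝ a function that is increasing, 1-Lipschitz (0 ≤ f(y + t) − f(y) ≤ t for all y and t > 0), satisfies f(y) = 0 for y ≤ a, and satisfies f(b + t) = f(b) + t for all t > 0. Let g be the greatest convex minorant of f and let F(y) denote the right-hand derivative of g at y. Then F is the cumulative distribution function of a probability distribution on [a, b]: F is increasing, right-continuous, takes values in [0, 1], F(y) = 0 for y < a, and F(y) = 1 for y ≥ b. -/

import Mathlib

/-- `g` is the greatest convex minorant of `f` on the set `I`. -/
def IsGCM (I : Set ℝ) (f g : ℝ → ℝ) : Prop :=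
  ConvexOn ℝ I g ∧ (∀ x ∈ I, g x ≤ f x) ∧
    ∀ g' : ℝ → ℝ, ConvexOn ℝ I g' → (∀ x ∈ I, g' x ≤ f x) → ∀ x ∈ I, g' x ≤ g x

open Set Filter Topology in
/-- If `f : ℝ → ℝ` is increasing and 1-Lipschitz, vanishes on `(-∞, a]`, and grows with unit
slope beyond `b` (i.e. `f (b + t) = f b + t` for `t > 0`), then the right-hand derivative `F`
of the greatest convex minorant `g` of `f` is the CDF of a probability distribution on `[a, b]`:
`F` is increasing, right-continuous, takes values in `[0, 1]`, vanishes left of `a`, and equals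
`1` from `b` onwards. -/
theorem gcm_slope_is_cdf (a b : ℝ) (hab : a < b) (f g F : ℝ → ℝ)
    (hf_mono : ∀ y t : ℝ, 0 < t → 0 ≤ f (y + t) - f y ∧ f (y + t) - f y ≤ t)
    (hf_lo : ∀ y, y ≤ a → f y = 0)
    (hf_hi : ∀ t : ℝ, 0 < t → f (b + t) = f b + t)
    (hGCM : IsGCM Set.univ f g)
    (hF : ∀ y, HasDerivWithinAt g (F y) (Set.Ici y) y) :
    Monotone F ∧ (∀ y, ContinuousWithinAt F (Set.Ici y) y) ∧
    (∀ y, F y ∈ Set.Icc (0 : ℝ) 1) ∧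
    (∀ y, y < a → F y = 0) ∧ (∀ y, b ≤ y → F y = 1) := by
  obtain ⟨hg_conv, hg_le, hg_max⟩ := hGCM
  -- f is nonnegative
  have hf0 : ∀ y, 0 ≤ f y := by
    intro y
    rcases le_or_gt y a with h | h
    · rw [hf_lo y h]
    · have h1 := (hf_mono a (y - a) (by linarith)).1
      have h2 : a + (y - a) = y := by ring
      rw [h2, hf_lo a le_rfl] at h1
      linarith
  -- g is nonnegative
  have hg0 : ∀ y, 0 ≤ g y := fun y =>
    hg_max (fun _ => 0) (convexOn_const 0 convex_univ) (fun x _ => hf0 x) y (mem_univ y)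
  have hga : ∀ y, y ≤ a → g y = 0 := fun y hy =>
    le_antisymm ((hg_le y (mem_univ y)).trans_eq (hf_lo y hy)) (hg0 y)
  -- the affine function ℓ
  set L : ℝ → ℝ := fun y => y + (f b - b) with hL
  have hLf : ∀ y, L y ≤ f y := by
    intro y
    rcases lt_trichotomy y b with h | h | h
    · have h2 := (hf_mono y (b - y) (by linarith)).2
      have h3 : y + (b - y) = b := by ring
      rw [h3] at h2
      simp only [hL]; linarith
    · simp [hL, h]
    · have := hf_hi (y - b) (by linarith)
      have h3 : b + (y - b) = y := by ring
      rw [h3] at this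
      simp only [hL]; linarith
  have hLconv : ConvexOn ℝ univ L :=
    (convexOn_id convex_univ).add (convexOn_const _ convex_univ)
  have hgb : ∀ y, b ≤ y → g y = L y := by
    intro y hy
    refine le_antisymm ?_ (hg_max L hLconv (fun x _ => hLf x) y (mem_univ y))
    refine (hg_le y (mem_univ y)).trans ?_
    rcases eq_or_lt_of_le hy with rfl | h
    · simp [hL]
    · have := hf_hi (y - b) (by linarith)
      have h3 : b + (y - b) = y := by ring
      rw [h3] at this
      simp only [hL]; linarith
  -- uniqueness of right derivatives
  have hFval : ∀ y c, HasDerivWithinAt g c (Ici y) y → F y = c := fun y c h =>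
    (uniqueDiffOn_Ici y y self_mem_Ici).eq_deriv _ (hF y) h
  -- F = 0 left of a
  have hF0 : ∀ y, y < a → F y = 0 := by
    intro y hy
    refine hFval y 0 ?_
    refine (hasDerivWithinAt_const y _ (0 : ℝ)).congr_of_eventuallyEq ?_ (hga y hy.le)
    filter_upwards [mem_nhdsWithin_of_mem_nhds (Iio_mem_nhds hy)] with z hz
    exact hga z (le_of_lt hz)
  -- F = 1 right of b
  have hF1 : ∀ y, b ≤ y → F y = 1 := by
    intro y hy
    refine hFval y 1 ?_
    have hL' : HasDerivWithinAt L 1 (Ici y) y := by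
      exact ((hasDerivAt_id y).add_const (f b - b)).hasDerivWithinAt
    exact hL'.congr (fun z hz => hgb z (hy.trans hz)) (hgb y hy)
  -- slope inequalities
  have key1 : ∀ x y : ℝ, x < y → F x ≤ slope g x y := fun x y h =>
    hg_conv.le_slope_of_hasDerivWithinAt_Ioi (mem_univ x) (mem_univ y) h
      ((hF x).mono Ioi_subset_Ici_self)
  have hslope : ∀ y : ℝ, Tendsto (slope g y) (𝓝[>] y) (𝓝 (F y)) := fun y =>
    (hasDerivWithinAt_iff_tendsto_slope' notMem_Ioi_self).mp
      ((hF y).mono Ioi_subset_Ici_self)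
  have key2 : ∀ x y : ℝ, x < y → slope g x y ≤ F y := by
    intro x y h
    refine ge_of_tendsto (hslope y) ?_
    filter_upwards [self_mem_nhdsWithin] with z hz
    have hx : x ∈ univ \ ({y} : Set ℝ) := ⟨mem_univ x, by simpa using h.ne⟩
    have hz' : z ∈ univ \ ({y} : Set ℝ) := ⟨mem_univ z, by simpa using (mem_Ioi.mp hz).ne'⟩
    have := hg_conv.slope_mono (mem_univ y) hx hz' (h.le.trans (mem_Ioi.mp hz).le)
    rwa [slope_comm] at this
  have hmono : Monotone F := by
    intro x y hxy
    rcases hxy.lt_or_eq with h | rfl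
    · exact (key1 x y h).trans (key2 x y h)
    · exact le_rfl
  -- bounds
  have hbound : ∀ y, F y ∈ Icc (0 : ℝ) 1 := by
    intro y
    constructor
    · rcases lt_or_ge y a with h | h
      · rw [hF0 y h]
      · have : F (a - 1) ≤ F y := hmono (by linarith)
        rw [hF0 (a - 1) (by linarith)] at this
        exact this
    · rcases le_or_gt b y with h | h
      · rw [hF1 y h]
      · have : F y ≤ F b := hmono h.le
        rwa [hF1 b le_rfl] at this
  -- right continuity
  have hrc : ∀ y, ContinuousWithinAt F (Ici y) y := by
    intro y
    have key3 : ∀ ε : ℝ, 0 < ε → ∃ z, y < z ∧ F z ≤ F y + ε := by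
      intro ε hε
      have h1 : ∀ᶠ w in 𝓝[>] y, slope g y w < F y + ε / 2 :=
        (hslope y).eventually (eventually_lt_nhds (by linarith : F y < F y + ε / 2))
      obtain ⟨w, hw1, hw2⟩ := (h1.and self_mem_nhdsWithin).exists
      
      -- the comparison function
      set φ : ℝ → ℝ := fun z => (g w - g y - F y * (z - y)) / (w - z) with hφ
      have hφc : ContinuousAt φ y := by
        apply ContinuousAt.div
        · fun_prop
        · fun_prop
        · exact sub_ne_zero.mpr hw2.ne'
      have hφy : φ y = slope g y w := by
        simp only [hφ, slope_def_field]
        ring_nf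
      have h2 : ∀ᶠ z in 𝓝 y, φ z < F y + ε / 2 := by
        refine hφc.eventually_lt_const ?_
        rw [hφy]; exact hw1
      have h3 : ∀ᶠ z in 𝓝[>] y, φ z < F y + ε / 2 ∧ z < w := by
        filter_upwards [mem_nhdsWithin_of_mem_nhds h2,
          mem_nhdsWithin_of_mem_nhds (Iio_mem_nhds hw2)] with z hza hzb
        exact ⟨hza, hzb⟩
      obtain ⟨z, ⟨hz1, hz2⟩, hz3⟩ := (h3.and self_mem_nhdsWithin).exists
      
      refine ⟨z, hz3, ?_⟩
      have hzw : z < w := hz2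
      have hFz : F z ≤ slope g z w := key1 z w hzw
      have hgz : g y + F y * (z - y) ≤ g z := by
        have := key1 y z hz3
        rw [slope_def_field] at this
        have hzy : (0:ℝ) < z - y := by linarith
        rw [le_div_iff₀ hzy] at this
        linarith
      have hsφ : slope g z w ≤ φ z := by
        rw [slope_def_field]
        have hwz : (0:ℝ) < w - z := by linarith
        have : φ z = (g w - g y - F y * (z - y)) / (w - z) := rfl
        rw [this]
        exact div_le_div_of_nonneg_right (by linarith) hwz.le
      linarith
    -- conclude right continuity from key3
    have hinf : sInf (F '' Ioi y) = F y := by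
      refine le_antisymm ?_ ?_
      · refine le_of_forall_pos_le_add fun ε hε => ?_
        obtain ⟨z, hz1, hz2⟩ := key3 ε hε
        refine (csInf_le ⟨F y, fun c hc => ?_⟩ (mem_image_of_mem F hz1)).trans hz2
        obtain ⟨u, hu, rfl⟩ := hc
        exact hmono (le_of_lt hu)
      · refine le_csInf ⟨F (y + 1), mem_image_of_mem F (by simp : y + 1 ∈ Ioi y)⟩ ?_
        rintro c ⟨u, hu, rfl⟩
        exact hmono (le_of_lt hu)
    have htend : Tendsto F (𝓝[>] y) (𝓝 (F y)) := by
      have := hmono.tendsto_nhdsGT y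
      rwa [hinf] at this
    have : Ici y = insert y (Ioi y) := by
      ext z; simp [le_iff_lt_or_eq, or_comm, eq_comm]
    rw [ContinuousWithinAt, this, nhdsWithin_insert]
    rw [Filter.tendsto_sup]
    exact ⟨tendsto_pure_nhds F y, htend⟩
  exact ⟨hmono, hrc, hbound, hF0, hF1⟩
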